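/- Let M be a σ-finite von Neumann algebra with an action α: G ↷ M of a second-countable locally compact group. For any two sequences (x_n), (y_n) ∈ E_α^ω ∩ N_ω(M), the product sequence (x_n y_n) belongs to E_α^ω. -/

import Mathlib

/-!
Common framework: concrete von Neumann algebras on complex Hilbert spaces,
normal states and functionals, group actions, cocycle conjugacy, tensor product
realizations, Ocneanu ultrapower sequence algebras, traces, amenability, etc.
-/

open scoped InnerProductSpace ENNReal
open Filter Topology

set_option linter.unusedSectionVars false

noncomputable section

namespace SSAW

/-- A bundled complex Hilbert space. -/
structure HilbertSpaceC : Type 1 where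
  carrier : Type
  [nacg : NormedAddCommGroup carrier]
  [ips : InnerProductSpace ℂ carrier]
  [cs : CompleteSpace carrier]

attribute [instance] HilbertSpaceC.nacg HilbertSpaceC.ips HilbertSpaceC.cs

variable {H : Type} [NormedAddCommGroup H] [InnerProductSpace ℂ H] [CompleteSpace H]
variable {K : Type} [NormedAddCommGroup K] [InnerProductSpace ℂ K] [CompleteSpace K]
variable {L : Type} [NormedAddCommGroup L] [InnerProductSpace ℂ L] [CompleteSpace L]

/-- A positive normal functional on `B(H)`, presented by an `ℓ²`-family of vectors. -/
def IsPositiveNormalFunctional (φ : (H →L[ℂ] H) → ℂ) : Prop :=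
  ∃ ξ : ℕ → H, Summable (fun i => ‖ξ i‖ ^ 2) ∧
    ∀ a : H →L[ℂ] H, φ a = ∑' i, ⟪ξ i, a (ξ i)⟫_ℂ

/-- A normal (σ-weakly continuous) functional on `B(H)`. -/
def IsNormalFunctional (φ : (H →L[ℂ] H) → ℂ) : Prop :=
  ∃ ξ η : ℕ → H, Summable (fun i => ‖ξ i‖ ^ 2) ∧ Summable (fun i => ‖η i‖ ^ 2) ∧
    ∀ a : H →L[ℂ] H, φ a = ∑' i, ⟪ξ i, a (η i)⟫_ℂ

/-- The norm of a functional restricted to (the unit ball of) a subset of `B(H)`. -/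
def normOn (S : Set (H →L[ℂ] H)) (φ : (H →L[ℂ] H) → ℂ) : ℝ :=
  sSup ((fun x => ‖φ x‖) '' {x | x ∈ S ∧ ‖x‖ ≤ 1})

/-- A normal state on the von Neumann algebra `M` (recorded as a functional on all of `B(H)`). -/
def IsNormalState (_M : VonNeumannAlgebra H) (φ : (H →L[ℂ] H) → ℂ) : Prop :=
  IsPositiveNormalFunctional φ ∧ φ 1 = 1

/-- Faithfulness of a functional on `M`. -/
def FaithfulOn (M : VonNeumannAlgebra H) (φ : (H →L[ℂ] H) → ℂ) : Prop :=
  ∀ x ∈ M, φ (star x * x) = 0 → x = 0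

/-- Traciality of a functional on `M`. -/
def IsTracialOn (M : VonNeumannAlgebra H) (φ : (H →L[ℂ] H) → ℂ) : Prop :=
  ∀ x ∈ M, ∀ y ∈ M, φ (x * y) = φ (y * x)

/-- `‖x‖_φ = φ(x*x)^{1/2}`. -/
def stateNorm (φ : (H →L[ℂ] H) → ℂ) (x : H →L[ℂ] H) : ℝ :=
  Real.sqrt (φ (star x * x)).re

/-- `‖x‖_φ^♯ = φ(x*x + xx*)^{1/2}`. -/
def sharpNorm (φ : (H →L[ℂ] H) → ℂ) (x : H →L[ℂ] H) : ℝ :=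
  Real.sqrt (φ (star x * x + x * star x)).re

def IsProjectionOp (p : H →L[ℂ] H) : Prop := p * p = p ∧ star p = p

def IsUnitaryIn (M : VonNeumannAlgebra H) (u : H →L[ℂ] H) : Prop :=
  u ∈ M ∧ star u * u = 1 ∧ u * star u = 1

/-- The center `Z(M)` of a von Neumann algebra, as a set of operators. -/
def VNCenter (M : VonNeumannAlgebra H) : Set (H →L[ℂ] H) :=
  {x | x ∈ M ∧ ∀ y ∈ M, x * y = y * x}

/-- `M` is a factor. -/
def IsFactor (M : VonNeumannAlgebra H) : Prop :=
  ∀ x ∈ VNCenter M, ∃ c : ℂ, x = c • (1 : H →L[ℂ] H)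

/-- `M` is σ-finite: it admits a faithful normal state. -/
def SigmaFinite (M : VonNeumannAlgebra H) : Prop :=
  ∃ φ : (H →L[ℂ] H) → ℂ, IsNormalState M φ ∧ FaithfulOn M φ

/-- `M` has separable predual. -/
def SeparablePredual (M : VonNeumannAlgebra H) : Prop :=
  ∃ D : Set ((H →L[ℂ] H) → ℂ), D.Countable ∧ (∀ φ ∈ D, IsNormalFunctional φ) ∧
    ∀ φ : (H →L[ℂ] H) → ℂ, IsNormalFunctional φ → ∀ ε : ℝ, 0 < ε →
      ∃ ψ ∈ D, normOn (M : Set (H →L[ℂ] H)) (fun x => φ x - ψ x) ≤ ε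

/-- A *-homomorphism between concrete von Neumann algebras, recorded as a map on all
bounded operators together with the algebraic properties on the members of `M`. -/
structure VNHom (M : VonNeumannAlgebra H) (N : VonNeumannAlgebra K) where
  toFun : (H →L[ℂ] H) → (K →L[ℂ] K)
  mem' : ∀ x ∈ M, toFun x ∈ N
  map_add' : ∀ x ∈ M, ∀ y ∈ M, toFun (x + y) = toFun x + toFun y
  map_smul' : ∀ (c : ℂ), ∀ x ∈ M, toFun (c • x) = c • toFun x
  map_mul' : ∀ x ∈ M, ∀ y ∈ M, toFun (x * y) = toFun x * toFun y
  map_star' : ∀ x ∈ M, toFun (star x) = star (toFun x)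

/-- A unital *-homomorphism. -/
def VNHom.Unital {M : VonNeumannAlgebra H} {N : VonNeumannAlgebra K} (f : VNHom M N) : Prop :=
  f.toFun 1 = 1

/-- Normality (σ-weak continuity) of a *-homomorphism. -/
def VNHom.Normal {M : VonNeumannAlgebra H} {N : VonNeumannAlgebra K} (f : VNHom M N) : Prop :=
  ∀ ψ : (K →L[ℂ] K) → ℂ, IsNormalFunctional ψ →
    ∃ ψ' : (H →L[ℂ] H) → ℂ, IsNormalFunctional ψ' ∧ ∀ x ∈ M, ψ (f.toFun x) = ψ' x

/-- `M` and `N` are isomorphic von Neumann algebras. -/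
def IsVNIso (M : VonNeumannAlgebra H) (N : VonNeumannAlgebra K) : Prop :=
  ∃ f : VNHom M N, f.Unital ∧ f.Normal ∧
    Set.BijOn f.toFun (M : Set (H →L[ℂ] H)) (N : Set (K →L[ℂ] K))

/-- A (point-predual-norm continuous) action of a topological group `G` on the von Neumann
algebra `M` by *-automorphisms. -/
structure VNAction (G : Type) [Group G] [TopologicalSpace G]
    {H : Type} [NormedAddCommGroup H] [InnerProductSpace ℂ H] [CompleteSpace H]
    (M : VonNeumannAlgebra H) where
  toFun : G → (H →L[ℂ] H) → (H →L[ℂ] H)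
  mem' : ∀ g, ∀ x ∈ M, toFun g x ∈ M
  map_add' : ∀ g, ∀ x ∈ M, ∀ y ∈ M, toFun g (x + y) = toFun g x + toFun g y
  map_smul' : ∀ g (c : ℂ), ∀ x ∈ M, toFun g (c • x) = c • toFun g x
  map_mul' : ∀ g, ∀ x ∈ M, ∀ y ∈ M, toFun g (x * y) = toFun g x * toFun g y
  map_star' : ∀ g, ∀ x ∈ M, toFun g (star x) = star (toFun g x)
  map_one' : ∀ g, toFun g 1 = 1
  id_eq' : ∀ x ∈ M, toFun 1 x = x
  comp_eq' : ∀ g h, ∀ x ∈ M, toFun (g * h) x = toFun g (toFun h x)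
  continuous' : ∀ φ : (H →L[ℂ] H) → ℂ, IsNormalFunctional φ → ∀ ε : ℝ, 0 < ε →
    ∃ U ∈ 𝓝 (1 : G), ∀ g ∈ U,
      normOn (M : Set (H →L[ℂ] H)) (fun x => φ (toFun g x) - φ x) ≤ ε

lemma normOn_zero_le {S : Set (H →L[ℂ] H)} {ψ : (H →L[ℂ] H) → ℂ}
    (hψ : ∀ x ∈ S, ‖x‖ ≤ 1 → ψ x = 0) {ε : ℝ} (hε : 0 ≤ ε) : normOn S ψ ≤ ε := by
  apply Real.sSup_le _ hε
  rintro y ⟨x, ⟨hxS, hx1⟩, rfl⟩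
  simpa [hψ x hxS hx1] using hε

/-- The trivial action of `G` on `M`. -/
def trivialVNAction (G : Type) [Group G] [TopologicalSpace G]
    (M : VonNeumannAlgebra H) : VNAction G M where
  toFun _ x := x
  mem' _ _ hx := hx
  map_add' _ _ _ _ _ := rfl
  map_smul' _ _ _ _ := rfl
  map_mul' _ _ _ _ _ := rfl
  map_star' _ _ _ := rfl
  map_one' _ := rfl
  id_eq' _ _ := rfl
  comp_eq' _ _ _ _ := rfl
  continuous' φ _ ε hε :=
    ⟨Set.univ, Filter.univ_mem, fun _ _ =>
      normOn_zero_le (fun x _ _ => by simp) hε.le⟩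

/-- Pulling back an action along a group quotient map (for discrete acting groups). -/
def VNAction.pullback {G G₀ : Type} [Group G] [TopologicalSpace G] [DiscreteTopology G]
    [Group G₀] [TopologicalSpace G₀] {M : VonNeumannAlgebra H}
    (δ : VNAction G₀ M) (π : G →* G₀) : VNAction G M where
  toFun g := δ.toFun (π g)
  mem' g := δ.mem' (π g)
  map_add' g := δ.map_add' (π g)
  map_smul' g := δ.map_smul' (π g)
  map_mul' g := δ.map_mul' (π g)
  map_star' g := δ.map_star' (π g)
  map_one' g := δ.map_one' (π g)
  id_eq' x hx := by
    show δ.toFun (π 1) x = x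
    rw [map_one]; exact δ.id_eq' x hx
  comp_eq' g h x hx := by
    show δ.toFun (π (g * h)) x = δ.toFun (π g) (δ.toFun (π h) x)
    rw [map_mul]; exact δ.comp_eq' (π g) (π h) x hx
  continuous' φ _ ε hε := by
    refine ⟨{1}, IsOpen.mem_nhds (isOpen_discrete _) rfl, ?_⟩
    intro g hg
    have hg1 : g = 1 := hg
    subst hg1
    apply normOn_zero_le _ hε.le
    intro x hx _
    show φ (δ.toFun (π 1) x) - φ x = 0
    rw [map_one, δ.id_eq' x hx, sub_self]

/-- A cocycle conjugacy `(θ, u) : (M, α) → (N, β)`. -/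
structure CocycleConjugacy {G : Type} [Group G] [TopologicalSpace G]
    {M : VonNeumannAlgebra H} {N : VonNeumannAlgebra K}
    (α : VNAction G M) (β : VNAction G N) where
  toHom : VNHom M N
  unital : toHom.Unital
  normal : toHom.Normal
  bij : Set.BijOn toHom.toFun (M : Set (H →L[ℂ] H)) (N : Set (K →L[ℂ] K))
  u : G → (K →L[ℂ] K)
  u_unitary : ∀ g, IsUnitaryIn N (u g)
  u_cont : ∀ ξ : K, Continuous fun g => (u g) ξ
  intertwine : ∀ g, ∀ x ∈ M,
    toHom.toFun (α.toFun g x) = u g * β.toFun g (toHom.toFun x) * star (u g)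
  cocycle : ∀ g h, u (g * h) = u g * β.toFun g (u h)

/-- Two actions are cocycle conjugate. -/
def CocycleConjugate {G : Type} [Group G] [TopologicalSpace G]
    {M : VonNeumannAlgebra H} {N : VonNeumannAlgebra K}
    (α : VNAction G M) (β : VNAction G N) : Prop :=
  Nonempty (CocycleConjugacy α β)

/-- A realization of the von Neumann tensor product `M ⊗̄ N` on a Hilbert space. -/
structure TensorProductOf (M : VonNeumannAlgebra H) (N : VonNeumannAlgebra K)
    (P : VonNeumannAlgebra L) where
  e₁ : VNHom M P
  e₂ : VNHom N P
  unital₁ : e₁.Unital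
  unital₂ : e₂.Unital
  normal₁ : e₁.Normal
  normal₂ : e₂.Normal
  inj₁ : Set.InjOn e₁.toFun (M : Set (H →L[ℂ] H))
  inj₂ : Set.InjOn e₂.toFun (N : Set (K →L[ℂ] K))
  commutes : ∀ x ∈ M, ∀ y ∈ N, e₁.toFun x * e₂.toFun y = e₂.toFun y * e₁.toFun x
  generates : ∀ Q : VonNeumannAlgebra L, (∀ x ∈ M, e₁.toFun x ∈ Q) →
    (∀ y ∈ N, e₂.toFun y ∈ Q) → ∀ z ∈ P, z ∈ Q
  productStates : ∀ (φ : (H →L[ℂ] H) → ℂ) (ψ : (K →L[ℂ] K) → ℂ),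
    IsNormalState M φ → IsNormalState N ψ →
    ∃ θ : (L →L[ℂ] L) → ℂ, IsNormalState P θ ∧
      ∀ x ∈ M, ∀ y ∈ N, θ (e₁.toFun x * e₂.toFun y) = φ x * ψ y

/-- The action `γ` on `P` realizes the tensor product action `α ⊗ δ` through the
tensor product realization `T`. -/
def TensorProductOf.IsEquivariant {G : Type} [Group G] [TopologicalSpace G]
    {M : VonNeumannAlgebra H} {N : VonNeumannAlgebra K} {P : VonNeumannAlgebra L}
    (T : TensorProductOf M N P) (α : VNAction G M) (δ : VNAction G N)
    (γ : VNAction G P) : Prop :=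
  (∀ g, ∀ x ∈ M, γ.toFun g (T.e₁.toFun x) = T.e₁.toFun (α.toFun g x)) ∧
  (∀ g, ∀ y ∈ N, γ.toFun g (T.e₂.toFun y) = T.e₂.toFun (δ.toFun g y))

/-- `α : G ↷ M` is cocycle conjugate to `α ⊗ δ` (through some realization of the
tensor product action). -/
def AbsorbsTensor {G : Type} [Group G] [TopologicalSpace G]
    {M : VonNeumannAlgebra H} {R : VonNeumannAlgebra K}
    (α : VNAction G M) (δ : VNAction G R) : Prop :=
  ∃ (L : HilbertSpaceC) (P : VonNeumannAlgebra L.carrier) (γ : VNAction G P)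
    (T : TensorProductOf M R P), T.IsEquivariant α δ γ ∧ CocycleConjugate α γ

/-- Approximate unitary equivalence (with respect to the `‖·‖_τ`-seminorm of a state `τ` on
the target) of two cocycle morphisms, given by raw data `(f₁, u₁)`, `(f₂, u₂)`, defined on a
source set `S`, with target action `β : G ↷ P`. -/
def ApproxUEqRaw {G : Type} [Group G] [TopologicalSpace G] {K₀ : Type}
    [NormedAddCommGroup K₀] [InnerProductSpace ℂ K₀] [CompleteSpace K₀]
    (P : VonNeumannAlgebra L) (β : VNAction G P) (τ : (L →L[ℂ] L) → ℂ)
    (S : Set (K₀ →L[ℂ] K₀)) (f₁ f₂ : (K₀ →L[ℂ] K₀) → (L →L[ℂ] L))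
    (u₁ u₂ : G → (L →L[ℂ] L)) : Prop :=
  ∃ w : ℕ → (L →L[ℂ] L), (∀ n, IsUnitaryIn P (w n)) ∧
    (∀ x ∈ S, Tendsto (fun n => stateNorm τ (w n * f₁ x * star (w n) - f₂ x)) atTop (𝓝 0)) ∧
    ∀ Kc : Set G, IsCompact Kc →
      Tendsto (fun n => ⨆ g ∈ Kc,
        stateNorm τ (w n * u₁ g * β.toFun g (star (w n)) - u₂ g)) atTop (𝓝 0)

/-- `α` strongly absorbs `δ`: the equivariant embedding `id_M ⊗ 1` into (a realization of)
`(M ⊗̄ R, α ⊗ δ)` is approximately unitarily equivalent to a cocycle conjugacy. -/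
def StrongAbsorption {G : Type} [Group G] [TopologicalSpace G]
    {M : VonNeumannAlgebra H} {R : VonNeumannAlgebra K}
    (α : VNAction G M) (δ : VNAction G R) : Prop :=
  ∃ (L : HilbertSpaceC) (P : VonNeumannAlgebra L.carrier) (γ : VNAction G P)
    (T : TensorProductOf M R P), T.IsEquivariant α δ γ ∧
    ∃ (cc : CocycleConjugacy α γ) (τP : (L.carrier →L[ℂ] L.carrier) → ℂ),
      IsNormalState P τP ∧ IsTracialOn P τP ∧ FaithfulOn P τP ∧
      ApproxUEqRaw P γ τP (M : Set (H →L[ℂ] H)) T.e₁.toFun cc.toHom.toFun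
        (fun _ => 1) cc.u

/-- A strongly self-absorbing action on (a copy of) the hyperfinite II₁ factor. -/
def StronglySelfAbsorbing {G : Type} [Group G] [TopologicalSpace G]
    {R : VonNeumannAlgebra K} (δ : VNAction G R) : Prop :=
  StrongAbsorption δ δ

/-- `δ` has approximately inner half-flip: the two equivariant embeddings
`id_R ⊗ 1` and `1 ⊗ id_R` into `(R ⊗̄ R, δ ⊗ δ)` are approximately unitarily equivalent. -/
def ApproxInnerHalfFlip {G : Type} [Group G] [TopologicalSpace G]
    {R : VonNeumannAlgebra K} (δ : VNAction G R) : Prop :=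
  ∃ (L : HilbertSpaceC) (P : VonNeumannAlgebra L.carrier) (γ : VNAction G P)
    (T : TensorProductOf R R P), T.IsEquivariant δ δ γ ∧
    ∃ τP : (L.carrier →L[ℂ] L.carrier) → ℂ,
      IsNormalState P τP ∧ IsTracialOn P τP ∧ FaithfulOn P τP ∧
      ApproxUEqRaw P γ τP (R : Set (K →L[ℂ] K)) T.e₁.toFun T.e₂.toFun
        (fun _ => 1) (fun _ => 1)

/-- Finite-dimensionality of a subset of `B(H)` (contained in a f.d. subspace). -/
def FinDimIn (S : Set (H →L[ℂ] H)) : Prop :=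
  ∃ t : Finset (H →L[ℂ] H),
    S ⊆ (Submodule.span ℂ (t : Set (H →L[ℂ] H)) : Submodule ℂ (H →L[ℂ] H))

/-- `R` is (a copy of) the hyperfinite II₁ factor: an infinite-dimensional hyperfinite
factor with a faithful normal tracial state. -/
def IsHyperfiniteIIOneFactor (R : VonNeumannAlgebra H) : Prop :=
  IsFactor R ∧
  (∃ τ : (H →L[ℂ] H) → ℂ, IsNormalState R τ ∧ IsTracialOn R τ ∧ FaithfulOn R τ) ∧
  ¬ FinDimIn (R : Set (H →L[ℂ] H)) ∧
  ∃ A : ℕ → Set (H →L[ℂ] H),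
    (∀ n, A n ⊆ (R : Set (H →L[ℂ] H)) ∧ (1 : H →L[ℂ] H) ∈ A n ∧
      (∀ x ∈ A n, ∀ y ∈ A n, x + y ∈ A n ∧ x * y ∈ A n) ∧
      (∀ (c : ℂ), ∀ x ∈ A n, c • x ∈ A n) ∧ (∀ x ∈ A n, star x ∈ A n) ∧
      FinDimIn (A n)) ∧
    (∀ n, A n ⊆ A (n + 1)) ∧
    (∀ x ∈ R, ∀ ε : ℝ, 0 < ε → ∀ s : Finset H,
      ∃ n, ∃ y ∈ A n, ∀ ξ ∈ s, ‖(x - y) ξ‖ < ε)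

/-- `M` is McDuff (relative to the given copy `R` of the hyperfinite II₁ factor):
`M ≅ M ⊗̄ R`. -/
def IsMcDuff (M : VonNeumannAlgebra H) (R : VonNeumannAlgebra K) : Prop :=
  ∃ (L : HilbertSpaceC) (P : VonNeumannAlgebra L.carrier)
    (_T : TensorProductOf M R P), IsVNIso M P

/-- A faithful normal semi-finite trace on `M` (as an `ℝ≥0∞`-valued weight,
determined by its values on positive elements). -/
structure FNSTrace (M : VonNeumannAlgebra H) where
  toFun : (H →L[ℂ] H) → ℝ≥0∞
  map_add' : ∀ x ∈ M, ∀ y ∈ M, x.IsPositive → y.IsPositive →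
    toFun (x + y) = toFun x + toFun y
  map_smul' : ∀ (c : ℝ), 0 ≤ c → ∀ x ∈ M, x.IsPositive →
    toFun ((c : ℂ) • x) = ENNReal.ofReal c * toFun x
  tracial' : ∀ x ∈ M, toFun (star x * x) = toFun (x * star x)
  normal' : ∀ (f : ℕ → (H →L[ℂ] H)), ∀ x ∈ M, (∀ n, f n ∈ M ∧ (f n).IsPositive) →
    (∀ n, (f (n + 1) - f n).IsPositive) →
    (∀ ξ : H, Tendsto (fun n => f n ξ) atTop (𝓝 (x ξ))) →
    toFun x = ⨆ n, toFun (f n)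
  faithful' : ∀ x ∈ M, x.IsPositive → toFun x = 0 → x = 0
  semifinite' : ∀ x ∈ M, x.IsPositive → x ≠ 0 →
    ∃ y ∈ (M : Set (H →L[ℂ] H)), y.IsPositive ∧ y ≠ 0 ∧ (x - y).IsPositive ∧ toFun y < ⊤

/-- `M` is semi-finite. -/
def IsSemifinite (M : VonNeumannAlgebra H) : Prop := Nonempty (FNSTrace M)

/-- `M` is finite (with separable predual): it admits a faithful normal tracial state. -/
def IsFiniteVN (M : VonNeumannAlgebra H) : Prop :=
  ∃ τ : (H →L[ℂ] H) → ℂ, IsNormalState M τ ∧ IsTracialOn M τ ∧ FaithfulOn M τ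

/-! ### Sequence algebras for the Ocneanu ultrapower -/

/-- A bounded sequence with entries in `M`. -/
def InSeqAlg (M : VonNeumannAlgebra H) (x : ℕ → (H →L[ℂ] H)) : Prop :=
  (∀ n, x n ∈ M) ∧ ∃ C : ℝ, ∀ n, ‖x n‖ ≤ C

/-- `(x_n) ∈ I_ω(M)`: a bounded sequence converging to `0` *-strongly along `ω`. -/
def IomegaSeq (ω : Ultrafilter ℕ) (M : VonNeumannAlgebra H) (x : ℕ → (H →L[ℂ] H)) : Prop :=
  InSeqAlg M x ∧ ∃ φ : (H →L[ℂ] H) → ℂ, IsNormalState M φ ∧ FaithfulOn M φ ∧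
    Tendsto (fun n => sharpNorm φ (x n)) (ω : Filter ℕ) (𝓝 0)

/-- `(x_n) ∈ N_ω(M)`: the multiplier set of `I_ω(M)`. -/
def NomegaSeq (ω : Ultrafilter ℕ) (M : VonNeumannAlgebra H) (x : ℕ → (H →L[ℂ] H)) : Prop :=
  InSeqAlg M x ∧ ∀ y : ℕ → (H →L[ℂ] H), IomegaSeq ω M y →
    IomegaSeq ω M (fun n => x n * y n) ∧ IomegaSeq ω M (fun n => y n * x n)

/-- `(x_n) ∈ C_ω(M)`: `lim_{n→ω} ‖[x_n, φ]‖ = 0` for every normal functional `φ`. -/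
def ComegaSeq (ω : Ultrafilter ℕ) (M : VonNeumannAlgebra H) (x : ℕ → (H →L[ℂ] H)) : Prop :=
  InSeqAlg M x ∧ ∀ φ : (H →L[ℂ] H) → ℂ, IsNormalFunctional φ →
    Tendsto (fun n => normOn (M : Set (H →L[ℂ] H)) (fun y => φ (y * x n) - φ (x n * y)))
      (ω : Filter ℕ) (𝓝 0)

/-- `(x_n) ∈ E_α^ω`: an `(α,ω)`-equicontinuous bounded sequence. -/
def EquicontSeq {G : Type} [Group G] [TopologicalSpace G] (ω : Ultrafilter ℕ)
    {M : VonNeumannAlgebra H} (α : VNAction G M) (x : ℕ → (H →L[ℂ] H)) : Prop :=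
  InSeqAlg M x ∧ ∃ φ : (H →L[ℂ] H) → ℂ, IsNormalState M φ ∧ FaithfulOn M φ ∧
    ∀ ε : ℝ, 0 < ε → ∃ W ∈ ω, ∃ U ∈ 𝓝 (1 : G), ∀ n ∈ W, ∀ g ∈ U,
      sharpNorm φ (α.toFun g (x n) - x n) < ε

/-- The ultralimit of a real sequence along `ω`. -/
def ultraRe (ω : Ultrafilter ℕ) (f : ℕ → ℝ) : ℝ := limUnder (ω : Filter ℕ) f

/-- The induced state `φ^ω` on the ultrapower, evaluated on a representing sequence. -/
def ultraState (ω : Ultrafilter ℕ) (φ : (H →L[ℂ] H) → ℂ) (x : ℕ → (H →L[ℂ] H)) : ℂ :=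
  limUnder (ω : Filter ℕ) fun n => φ (x n)

/-- `‖·‖_{φ^ω}` of (the class of) a representing sequence. -/
def ultraNorm (ω : Ultrafilter ℕ) (φ : (H →L[ℂ] H) → ℂ) (x : ℕ → (H →L[ℂ] H)) : ℝ :=
  Real.sqrt (ultraRe ω fun n => (φ (star (x n) * x n)).re)

/-- `‖·‖_{φ^ω}^♯` of (the class of) a representing sequence. -/
def ultraSharpNorm (ω : Ultrafilter ℕ) (φ : (H →L[ℂ] H) → ℂ) (x : ℕ → (H →L[ℂ] H)) : ℝ :=
  Real.sqrt (ultraRe ω fun n => (φ (star (x n) * x n + x n * star (x n))).re)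

/-- A unital equivariant *-homomorphism `(R, δ) → (M_{ω,α}, α_ω)`, recorded on
representing sequences (all identities hold modulo `I_ω(M)`). -/
structure UltraHom {G : Type} [Group G] [TopologicalSpace G] (ω : Ultrafilter ℕ)
    {K₀ : Type} [NormedAddCommGroup K₀] [InnerProductSpace ℂ K₀] [CompleteSpace K₀]
    {H₀ : Type} [NormedAddCommGroup H₀] [InnerProductSpace ℂ H₀] [CompleteSpace H₀]
    {R : VonNeumannAlgebra K₀} {M : VonNeumannAlgebra H₀}
    (δ : VNAction G R) (α : VNAction G M) where
  toFun : (K₀ →L[ℂ] K₀) → ℕ → (H₀ →L[ℂ] H₀)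
  mem' : ∀ x ∈ R, EquicontSeq ω α (toFun x) ∧ NomegaSeq ω M (toFun x) ∧
    ComegaSeq ω M (toFun x)
  map_add' : ∀ x ∈ R, ∀ y ∈ R,
    IomegaSeq ω M (fun n => toFun (x + y) n - (toFun x n + toFun y n))
  map_smul' : ∀ (c : ℂ), ∀ x ∈ R,
    IomegaSeq ω M (fun n => toFun (c • x) n - c • toFun x n)
  map_mul' : ∀ x ∈ R, ∀ y ∈ R,
    IomegaSeq ω M (fun n => toFun (x * y) n - toFun x n * toFun y n)
  map_star' : ∀ x ∈ R, IomegaSeq ω M (fun n => toFun (star x) n - star (toFun x n))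
  map_one' : IomegaSeq ω M (fun n => toFun 1 n - 1)
  equivariant' : ∀ g, ∀ x ∈ R,
    IomegaSeq ω M (fun n => α.toFun g (toFun x n) - toFun (δ.toFun g x) n)

/-- Amenability of an action of a discrete group, via a `G`-equivariant conditional
expectation `ℓ∞(G) ⊗̄ M → M` (here `ℓ∞(G) ⊗̄ M` is realized as bounded `M`-valued
functions on `G`). -/
def AmenableVNAction {G : Type} [Group G] [TopologicalSpace G]
    {M : VonNeumannAlgebra H} (α : VNAction G M) : Prop :=
  ∃ E : (G → (H →L[ℂ] H)) → (H →L[ℂ] H),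
    (∀ f : G → (H →L[ℂ] H), (∀ g, f g ∈ M) → (∃ C : ℝ, ∀ g, ‖f g‖ ≤ C) →
        E f ∈ M) ∧
    (∀ f₁ f₂ : G → (H →L[ℂ] H), (∀ g, f₁ g ∈ M) → (∃ C : ℝ, ∀ g, ‖f₁ g‖ ≤ C) →
        (∀ g, f₂ g ∈ M) → (∃ C : ℝ, ∀ g, ‖f₂ g‖ ≤ C) →
        E (fun g => f₁ g + f₂ g) = E f₁ + E f₂) ∧
    (∀ (c : ℂ) (f : G → (H →L[ℂ] H)), (∀ g, f g ∈ M) → (∃ C : ℝ, ∀ g, ‖f g‖ ≤ C) →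
        E (fun g => c • f g) = c • E f) ∧
    (∀ f : G → (H →L[ℂ] H), (∀ g, f g ∈ M) → (∃ C : ℝ, ∀ g, ‖f g‖ ≤ C) →
        (∀ g, (f g).IsPositive) → (E f).IsPositive) ∧
    (E (fun _ => 1) = 1) ∧
    (∀ f : G → (H →L[ℂ] H), (∀ g, f g ∈ M) → (∃ C : ℝ, ∀ g, ‖f g‖ ≤ C) →
        ∀ a ∈ M, ∀ b ∈ M, E (fun g => a * f g * b) = a * E f * b) ∧
    (∀ f : G → (H →L[ℂ] H), (∀ g, f g ∈ M) → (∃ C : ℝ, ∀ g, ‖f g‖ ≤ C) →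
        ∀ g₀ : G, E (fun h => α.toFun g₀ (f (g₀⁻¹ * h))) = α.toFun g₀ (E f))

/-- Følner characterization of amenability for a (countable) discrete group. -/
def FolnerAmenable (G : Type) [Group G] : Prop :=
  ∀ (S : Finset G) (ε : ℝ), 0 < ε → ∃ F : Finset G, F.Nonempty ∧
    ∀ g ∈ S,
      letI := Classical.decEq G
      (((F.image fun x => g * x) \ F).card + (F \ F.image fun x => g * x).card : ℝ)
        ≤ ε * F.card

/-- Outerness of an action. -/
def IsOuter {G : Type} [Group G] [TopologicalSpace G] {R : VonNeumannAlgebra H}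
    (δ : VNAction G R) : Prop :=
  ∀ g : G, g ≠ 1 → ¬ ∃ u : H →L[ℂ] H, IsUnitaryIn R u ∧
    ∀ x ∈ R, δ.toFun g x = u * x * star u

/-- The induced automorphism `α_{ω,g}` of the asymptotic centralizer `M_ω` is trivial. -/
def CentrallyTrivialSeq {G : Type} [Group G] [TopologicalSpace G] (ω : Ultrafilter ℕ)
    {M : VonNeumannAlgebra H} (α : VNAction G M) (g : G) : Prop :=
  ∀ x : ℕ → (H →L[ℂ] H), ComegaSeq ω M x →
    IomegaSeq ω M (fun n => α.toFun g (x n) - x n)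

/-- `α_g` is properly centrally non-trivial: for every non-zero central projection `p`,
the induced automorphism of `M_ω` is non-trivial on `p M_ω`. -/
def ProperlyCentrallyNontrivial {G : Type} [Group G] [TopologicalSpace G]
    (ω : Ultrafilter ℕ) {M : VonNeumannAlgebra H} (α : VNAction G M) (g : G) : Prop :=
  ∀ p : H →L[ℂ] H, p ∈ VNCenter M → IsProjectionOp p → p ≠ 0 →
    ∃ x : ℕ → (H →L[ℂ] H), ComegaSeq ω M x ∧
      ¬ IomegaSeq ω M (fun n => p * (α.toFun g (x n) - x n))


section Part1

def vSq (ξ : ℕ → H) (z : H →L[ℂ] H) : ℝ :=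
  ∑' i, (‖z (ξ i)‖ ^ 2 + ‖(star z) (ξ i)‖ ^ 2)

lemma summable_vSq {ξ : ℕ → H} (hξ : Summable fun i => ‖ξ i‖ ^ 2) (z : H →L[ℂ] H) :
    Summable fun i => ‖z (ξ i)‖ ^ 2 + ‖(star z) (ξ i)‖ ^ 2 := by
  refine Summable.of_nonneg_of_le (fun i => by positivity) (fun i => ?_)
    (hξ.mul_left (2 * ‖z‖ ^ 2))
  have h1 : ‖z (ξ i)‖ ≤ ‖z‖ * ‖ξ i‖ := z.le_opNorm _
  have h2 : ‖(star z) (ξ i)‖ ≤ ‖z‖ * ‖ξ i‖ := by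
    simpa [norm_star] using (star z).le_opNorm (ξ i)
  have h3 : (0:ℝ) ≤ ‖z (ξ i)‖ := norm_nonneg _
  have h4 : (0:ℝ) ≤ ‖(star z) (ξ i)‖ := norm_nonneg _
  have h5 : (0:ℝ) ≤ ‖z‖ * ‖ξ i‖ := by positivity
  nlinarith

lemma vSq_nonneg (ξ : ℕ → H) (z : H →L[ℂ] H) : 0 ≤ vSq ξ z :=
  tsum_nonneg fun i => by positivity

lemma sharp_sq_eq {φ : (H →L[ℂ] H) → ℂ} {ξ : ℕ → H}
    (hξ : Summable fun i => ‖ξ i‖ ^ 2)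
    (hrep : ∀ a : H →L[ℂ] H, φ a = ∑' i, ⟪ξ i, a (ξ i)⟫_ℂ) (z : H →L[ℂ] H) :
    (φ (star z * z + z * star z)).re = vSq ξ z := by
  have e : ∀ i, ⟪ξ i, (star z * z + z * star z) (ξ i)⟫_ℂ
      = ((‖z (ξ i)‖ ^ 2 + ‖(star z) (ξ i)‖ ^ 2 : ℝ) : ℂ) := by
    intro i
    have b1 : (star z * z + z * star z) (ξ i) = (star z) (z (ξ i)) + z ((star z) (ξ i)) := rfl
    rw [b1, inner_add_right]
    have c1 : ⟪ξ i, (star z) (z (ξ i))⟫_ℂ = ((‖z (ξ i)‖:ℂ)) ^ 2 := by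
      rw [ContinuousLinearMap.star_eq_adjoint, ContinuousLinearMap.adjoint_inner_right,
        inner_self_eq_norm_sq_to_K]
      norm_cast
    have c2 : ⟪ξ i, z ((star z) (ξ i))⟫_ℂ = ((‖(star z) (ξ i)‖:ℂ)) ^ 2 := by
      rw [← ContinuousLinearMap.adjoint_inner_left z, ← ContinuousLinearMap.star_eq_adjoint,
        inner_self_eq_norm_sq_to_K]
      norm_cast
    rw [c1, c2]; push_cast; ring
  rw [hrep, tsum_congr e]
  have := ContinuousLinearMap.map_tsum Complex.ofRealCLM (summable_vSq hξ z)
  have e2 : ∑' i, ((‖z (ξ i)‖ ^ 2 + ‖(star z) (ξ i)‖ ^ 2 : ℝ) : ℂ) = ((vSq ξ z : ℝ) : ℂ) := by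
    simpa [Complex.ofRealCLM_apply, vSq] using this.symm
  rw [e2, Complex.ofReal_re]

lemma sharpNorm_eq {φ : (H →L[ℂ] H) → ℂ} {ξ : ℕ → H}
    (hξ : Summable fun i => ‖ξ i‖ ^ 2)
    (hrep : ∀ a : H →L[ℂ] H, φ a = ∑' i, ⟪ξ i, a (ξ i)⟫_ℂ) (z : H →L[ℂ] H) :
    sharpNorm φ z = Real.sqrt (vSq ξ z) := by
  unfold sharpNorm; rw [sharp_sq_eq hξ hrep]

lemma sharpNorm_lt_iff {φ : (H →L[ℂ] H) → ℂ} {ξ : ℕ → H}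
    (hξ : Summable fun i => ‖ξ i‖ ^ 2)
    (hrep : ∀ a : H →L[ℂ] H, φ a = ∑' i, ⟪ξ i, a (ξ i)⟫_ℂ) (z : H →L[ℂ] H)
    {ε : ℝ} (hε : 0 < ε) : sharpNorm φ z < ε ↔ vSq ξ z < ε ^ 2 := by
  rw [sharpNorm_eq hξ hrep]; exact Real.sqrt_lt' hε

lemma sharpNorm_nonneg (φ : (H →L[ℂ] H) → ℂ) (z : H →L[ℂ] H) : 0 ≤ sharpNorm φ z :=
  Real.sqrt_nonneg _

lemma tendsto_vSq_of_sharp {F : Filter ℕ} {φ : (H →L[ℂ] H) → ℂ} {ξ : ℕ → H}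
    (hξ : Summable fun i => ‖ξ i‖ ^ 2)
    (hrep : ∀ a : H →L[ℂ] H, φ a = ∑' i, ⟪ξ i, a (ξ i)⟫_ℂ) {z : ℕ → H →L[ℂ] H}
    (h : Tendsto (fun n => sharpNorm φ (z n)) F (𝓝 0)) :
    Tendsto (fun n => vSq ξ (z n)) F (𝓝 0) := by
  have h2 : Tendsto (fun n => sharpNorm φ (z n) * sharpNorm φ (z n)) F (𝓝 0) := by
    simpa using h.mul h
  refine h2.congr fun n => ?_
  rw [sharpNorm_eq hξ hrep (z n), Real.mul_self_sqrt (vSq_nonneg ξ (z n))]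

lemma tendsto_sharp_of_vSq {F : Filter ℕ} {φ : (H →L[ℂ] H) → ℂ} {ξ : ℕ → H}
    (hξ : Summable fun i => ‖ξ i‖ ^ 2)
    (hrep : ∀ a : H →L[ℂ] H, φ a = ∑' i, ⟪ξ i, a (ξ i)⟫_ℂ) {z : ℕ → H →L[ℂ] H}
    (h : Tendsto (fun n => vSq ξ (z n)) F (𝓝 0)) :
    Tendsto (fun n => sharpNorm φ (z n)) F (𝓝 0) := by
  have := (Real.continuous_sqrt.tendsto' 0 0 (by simp)).comp h
  exact this.congr fun n => (sharpNorm_eq hξ hrep (z n)).symm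

lemma tendsto_apply_of_vSq {F : Filter ℕ} {ξ : ℕ → H}
    (hξ : Summable fun i => ‖ξ i‖ ^ 2) {z : ℕ → H →L[ℂ] H}
    (h : Tendsto (fun n => vSq ξ (z n)) F (𝓝 0)) (i : ℕ) :
    Tendsto (fun n => z n (ξ i)) F (𝓝 0) ∧ Tendsto (fun n => (star (z n)) (ξ i)) F (𝓝 0) := by
  have key : ∀ (w : ℕ → H), (∀ n, ‖w n‖ ^ 2 ≤ vSq ξ (z n)) → Tendsto w F (𝓝 0) := by
    intro w hw
    have hA : Tendsto (fun n => ‖w n‖ ^ 2) F (𝓝 0) :=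
      squeeze_zero (fun n => by positivity) hw h
    rw [tendsto_zero_iff_norm_tendsto_zero]
    refine ((Real.continuous_sqrt.tendsto' 0 0 (by simp)).comp hA).congr fun n => ?_
    exact Real.sqrt_sq (norm_nonneg _)
  constructor
  · refine key _ fun n => ?_
    refine le_trans (le_add_of_nonneg_right (by positivity))
      (Summable.le_tsum (summable_vSq hξ (z n)) i fun j _ => by positivity)
  · refine key _ fun n => ?_
    refine le_trans (le_add_of_nonneg_left (by positivity))
      (Summable.le_tsum (summable_vSq hξ (z n)) i fun j _ => by positivity)

lemma tendsto_tsum_of_dominated {F : Filter ℕ} (h : ℕ → ℕ → ℝ) (b : ℕ → ℝ)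
    (hb : Summable b) (h0 : ∀ i n, 0 ≤ h i n) (hle : ∀ i n, h i n ≤ b i)
    (hterm : ∀ i, Tendsto (fun n => h i n) F (𝓝 0)) :
    Tendsto (fun n => ∑' i, h i n) F (𝓝 0) := by
  rw [Metric.tendsto_nhds]
  intro ε hε
  obtain ⟨N, hN⟩ : ∃ N, ∑' i, b (i + N) < ε / 2 := by
    have ht : Tendsto (fun k => ∑' i, b (i + k)) atTop (𝓝 0) := by
      have := tendsto_sum_nat_add b
      exact this
    exact (ht.eventually (eventually_lt_nhds (by linarith : (0:ℝ) < ε/2))).exists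
  have hev : ∀ᶠ n in F, ∀ i ∈ Finset.range N, h i n < ε / (2 * (N + 1)) := by
    rw [Filter.eventually_all_finset]
    intro i _
    exact (hterm i).eventually (eventually_lt_nhds (by positivity))
  filter_upwards [hev] with n hn
  have hsum_n : Summable fun i => h i n :=
    Summable.of_nonneg_of_le (fun i => h0 i n) (fun i => hle i n) hb
  have split := Summable.sum_add_tsum_nat_add (f := fun i => h i n) N hsum_n
  have tail_le : ∑' i, h (i + N) n ≤ ∑' i, b (i + N) :=
    Summable.tsum_le_tsum (fun i => hle _ n) ((summable_nat_add_iff N).mpr hsum_n)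
      ((summable_nat_add_iff N).mpr hb)
  have head_le : ∑ i ∈ Finset.range N, h i n ≤ N * (ε / (2 * (N + 1))) := by
    calc ∑ i ∈ Finset.range N, h i n ≤ ∑ _i ∈ Finset.range N, ε / (2 * (N + 1)) :=
          Finset.sum_le_sum fun i hi => (hn i hi).le
      _ = N * (ε / (2 * (N + 1))) := by simp [mul_comm]
  have htotal : ∑' i, h i n < ε := by
    have hNlt : (N:ℝ) * (ε / (2 * (N + 1))) < ε / 2 := by
      have h1 : (N:ℝ) / (2 * (N+1)) < 1/2 := by
        rw [div_lt_div_iff₀ (by positivity) (by norm_num)]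
        nlinarith [Nat.cast_nonneg (α := ℝ) N]
      have h2 : (N:ℝ) * (ε / (2 * (N + 1))) = ε * ((N:ℝ) / (2*((N:ℝ)+1))) := by ring
      rw [h2]
      calc ε * ((N:ℝ) / (2*((N:ℝ)+1))) < ε * (1/2) := by
            exact mul_lt_mul_of_pos_left h1 hε
        _ = ε / 2 := by ring
    nlinarith [(tsum_nonneg (fun i => h0 i n) : 0 ≤ ∑' i, h i n) , split, tail_le, head_le]
  rw [Real.dist_eq, sub_zero, abs_of_nonneg (tsum_nonneg fun i => h0 i n)]
  exact htotal

end Part1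


section Part2

lemma star_mem_centralizer' (M : VonNeumannAlgebra H) {a : H →L[ℂ] H}
    (ha : a ∈ Set.centralizer (M : Set (H →L[ℂ] H))) :
    star a ∈ Set.centralizer (M : Set (H →L[ℂ] H)) := by
  intro m hm
  have h := ha (star m) (star_mem hm)
  calc m * star a = star (a * star m) := by rw [star_mul, star_star]
    _ = star (star m * a) := by rw [h]
    _ = star a * m := by rw [star_mul, star_star]

lemma strong_of_sharp {F : Filter ℕ} (M : VonNeumannAlgebra H) {φ : (H →L[ℂ] H) → ℂ}
    {ξ : ℕ → H} (hξ : Summable fun i => ‖ξ i‖ ^ 2)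
    (hrep : ∀ a : H →L[ℂ] H, φ a = ∑' i, ⟪ξ i, a (ξ i)⟫_ℂ)
    (hfaith : FaithfulOn M φ) {z : ℕ → H →L[ℂ] H} (hzM : ∀ n, z n ∈ M)
    {C : ℝ} (hC : ∀ n, ‖z n‖ ≤ C)
    (h : Tendsto (fun n => sharpNorm φ (z n)) F (𝓝 0)) (ζ : H) :
    Tendsto (fun n => z n ζ) F (𝓝 0) ∧ Tendsto (fun n => (star (z n)) ζ) F (𝓝 0) := by
  classical
  have hC0 : 0 ≤ C := le_trans (norm_nonneg _) (hC 0)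
  have hvSq := tendsto_vSq_of_sharp hξ hrep h
  have hbase := fun i => tendsto_apply_of_vSq hξ hvSq i
  set Mc : Set (H →L[ℂ] H) := Set.centralizer (M : Set (H →L[ℂ] H)) with hMc
  set S : Set H := {v | ∃ a ∈ Mc, ∃ i, a (ξ i) = v} with hS
  -- convergence on the span of S
  have hgood : ∀ v ∈ Submodule.span ℂ S,
      Tendsto (fun n => z n v) F (𝓝 0) ∧ Tendsto (fun n => (star (z n)) v) F (𝓝 0) := by
    intro v hv
    induction hv using Submodule.span_induction with
    | mem v hv =>
      obtain ⟨a, ha, i, rfl⟩ := hv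
      have hcomm : ∀ (w : H →L[ℂ] H), w ∈ M → ∀ u : H, w (a u) = a (w u) := by
        intro w hw u
        have hcw : w * a = a * w := ha w hw
        calc w (a u) = (w * a) u := rfl
          _ = (a * w) u := by rw [hcw]
          _ = a (w u) := rfl
      constructor
      · have := (a.continuous.tendsto 0).comp (hbase i).1
        refine this.congr' ?_ |>.mono_right ?_
        · exact Filter.Eventually.of_forall fun n => (hcomm (z n) (hzM n) (ξ i)).symm
        · rw [map_zero]
      · have := (a.continuous.tendsto 0).comp (hbase i).2
        refine this.congr' ?_ |>.mono_right ?_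
        · exact Filter.Eventually.of_forall fun n =>
            (hcomm (star (z n)) (star_mem (hzM n)) (ξ i)).symm
        · rw [map_zero]
    | zero => constructor <;> · simpa using (tendsto_const_nhds : Tendsto (fun _ : ℕ => (0:H)) F _)
    | add u v hu hv ihu ihv =>
      exact ⟨by simpa [map_add] using ihu.1.add ihv.1, by simpa [map_add] using ihu.2.add ihv.2⟩
    | smul c u hu ihu =>
      constructor
      · have := ihu.1.const_smul c
        simpa [map_smul] using this
      · have := ihu.2.const_smul c
        simpa [map_smul] using this
  -- density of the span
  set V : Submodule ℂ H := (Submodule.span ℂ S).topologicalClosure with hV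
  haveI : CompleteSpace V := (Submodule.isClosed_topologicalClosure _).completeSpace_coe
  set P : H →L[ℂ] H := V.subtypeL.comp (V.orthogonalProjectionOnto) with hP
  have hPapply : ∀ w : H, P w = (V.orthogonalProjectionOnto w : H) := fun w => rfl
  have hPmem : ∀ w : H, P w ∈ V := fun w => by rw [hPapply]; exact (V.orthogonalProjectionOnto w).2
  have hPid : ∀ v ∈ V, P v = v := fun v hv => by
    rw [hPapply]; exact Submodule.starProjection_eq_self_iff.mpr hv
  have hPperp : ∀ w ∈ Vᗮ, P w = 0 := fun w hw => by
    rw [hPapply, Submodule.orthogonalProjectionOnto_apply_of_mem_orthogonal hw]; rfl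
  have hmapsV : ∀ a ∈ Mc, ∀ v ∈ V, a v ∈ V := by
    intro a ha v hv
    have hspan : ∀ u ∈ Submodule.span ℂ S, a u ∈ Submodule.span ℂ S := by
      intro u hu
      induction hu using Submodule.span_induction with
      | mem u hu =>
        obtain ⟨b, hb, i, rfl⟩ := hu
        exact Submodule.subset_span ⟨a * b, Set.mul_mem_centralizer ha hb, i, rfl⟩
      | zero => rw [map_zero]; exact Submodule.zero_mem _
      | add u w hu hw ihu ihw => rw [map_add]; exact Submodule.add_mem _ ihu ihw
      | smul c u hu ihu => rw [map_smul]; exact Submodule.smul_mem _ c ihu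
    have hv' : v ∈ closure (Submodule.span ℂ S : Set H) := by
      rw [← Submodule.topologicalClosure_coe]; exact hv
    have := map_mem_closure a.continuous hv' hspan
    rw [← Submodule.topologicalClosure_coe] at this
    exact this
  have hPcomm : P ∈ Set.centralizer Mc := by
    intro a ha
    ext w
    have hw_perp : w - P w ∈ Vᗮ := by
      rw [hPapply]; exact Submodule.sub_starProjection_mem_orthogonal w
    have haPw : a (P w) ∈ V := hmapsV a ha _ (hPmem w)
    have hperp2 : a (w - P w) ∈ Vᗮ := by
      rw [Submodule.mem_orthogonal]
      intro v hv
      have hsv : (star a) v ∈ V := hmapsV (star a) (star_mem_centralizer' M ha) v hv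
      have : ⟪v, a (w - P w)⟫_ℂ = ⟪(star a) v, w - P w⟫_ℂ := by
        rw [ContinuousLinearMap.star_eq_adjoint, ContinuousLinearMap.adjoint_inner_left]
      rw [this]
      exact ((Submodule.mem_orthogonal V _).mp hw_perp) _ hsv
    have hdec : a w = a (P w) + a (w - P w) := by rw [← map_add]; congr 1; abel
    show a (P w) = P (a w)
    rw [hdec, map_add, hPid _ haPw, hPperp _ hperp2, add_zero]
  have hPM : P ∈ M := by
    have h2 : P ∈ (M : Set (H →L[ℂ] H)) := by
      rw [← M.centralizer_centralizer]
      exact hPcomm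
    exact h2
  have hξV : ∀ i, ξ i ∈ V := fun i => by
    refine Submodule.le_topologicalClosure _ (Submodule.subset_span ?_)
    exact ⟨1, (Set.one_mem_centralizer : (1 : H →L[ℂ] H) ∈ Mc), i, by simp⟩
  have hφP : φ (1 - P) = 0 := by
    rw [hrep]
    have : ∀ i, ⟪ξ i, ((1 : H →L[ℂ] H) - P) (ξ i)⟫_ℂ = 0 := by
      intro i
      have : ((1 : H →L[ℂ] H) - P) (ξ i) = ξ i - P (ξ i) := rfl
      rw [this, hPid _ (hξV i), sub_self, inner_zero_right]
    rw [tsum_congr this, tsum_zero]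
  have hPstar : star P = P := isSelfAdjoint_starProjection V
  have hPP : P * P = P := by
    ext w
    show P (P w) = P w
    exact hPid _ (hPmem w)
  have hP1 : (1 : H →L[ℂ] H) - P = 0 := by
    apply hfaith _ (sub_mem (one_mem M) hPM)
    have hexp : star ((1 : H →L[ℂ] H) - P) * ((1 : H →L[ℂ] H) - P) = 1 - P := by
      rw [star_sub, star_one, hPstar]
      have : ((1 : H →L[ℂ] H) - P) * (1 - P) = 1 - P - P + P * P := by noncomm_ring
      rw [this, hPP]; abel
    rw [hexp, hφP]
  have hPall : ∀ w : H, w ∈ V := by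
    intro w
    have hPeq : P = 1 := by
      have := sub_eq_zero.mp hP1
      exact this.symm
    have : P w = w := by rw [hPeq]; rfl
    exact this ▸ hPmem w
  -- conclusion
  have main : ∀ (w : ℕ → (H →L[ℂ] H)), (∀ n, ‖w n‖ ≤ C) →
      (∀ v ∈ Submodule.span ℂ S, Tendsto (fun n => w n v) F (𝓝 0)) →
      Tendsto (fun n => w n ζ) F (𝓝 0) := by
    intro w hwC hwgood
    rw [Metric.tendsto_nhds]
    intro ε hε
    have hζV : ζ ∈ closure (Submodule.span ℂ S : Set H) := by
      rw [← Submodule.topologicalClosure_coe]; exact hPall ζ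
    obtain ⟨v, hvmem, hvdist⟩ := Metric.mem_closure_iff.mp hζV (ε / (2 * (C + 1)))
      (by positivity)
    have hv := hwgood v hvmem
    have hev := (Metric.tendsto_nhds.mp hv) (ε / 2) (by positivity)
    filter_upwards [hev] with n hn
    rw [dist_zero_right] at hn ⊢
    have h1 : ‖w n ζ‖ ≤ ‖w n (ζ - v)‖ + ‖w n v‖ := by
      have : w n ζ = w n (ζ - v) + w n v := by rw [← map_add]; congr 1; abel
      rw [this]; exact norm_add_le _ _
    have h2 : ‖w n (ζ - v)‖ ≤ C * ‖ζ - v‖ :=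
      le_trans ((w n).le_opNorm _) (mul_le_mul_of_nonneg_right (hwC n) (norm_nonneg _))
    have h3 : ‖ζ - v‖ < ε / (2 * (C + 1)) := by rwa [← dist_eq_norm]
    have h4 : C * ‖ζ - v‖ < ε / 2 := by
      have hC1 : C < C + 1 := by linarith
      calc C * ‖ζ - v‖ ≤ C * (ε / (2 * (C + 1))) := by
            apply mul_le_mul_of_nonneg_left h3.le hC0
        _ < ε / 2 := by
            rw [show C * (ε / (2 * (C + 1))) = ε * (C / (2 * (C+1))) by ring]
            have : C / (2 * (C+1)) < 1/2 := by
              rw [div_lt_div_iff₀ (by positivity) (by norm_num)]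
              linarith
            calc ε * (C / (2*(C+1))) < ε * (1/2) := mul_lt_mul_of_pos_left this hε
              _ = ε / 2 := by ring
    linarith
  refine ⟨main z hC fun v hv => (hgood v hv).1, main (fun n => star (z n)) ?_
    fun v hv => (hgood v hv).2⟩
  intro n; simpa [norm_star] using hC n

lemma tendsto_sharp_switch {F : Filter ℕ} (M : VonNeumannAlgebra H)
    {ψ : (H →L[ℂ] H) → ℂ} (hψ : IsNormalState M ψ) (hψf : FaithfulOn M ψ)
    {φ' : (H →L[ℂ] H) → ℂ} (hφ' : IsPositiveNormalFunctional φ')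
    {z : ℕ → H →L[ℂ] H} (hzM : ∀ n, z n ∈ M) {C : ℝ} (hC : ∀ n, ‖z n‖ ≤ C)
    (h : Tendsto (fun n => sharpNorm ψ (z n)) F (𝓝 0)) :
    Tendsto (fun n => sharpNorm φ' (z n)) F (𝓝 0) := by
  obtain ⟨ξ, hξ, hrep⟩ := hψ.1
  obtain ⟨η, hη, hrep'⟩ := hφ'
  have hC0 : 0 ≤ C := le_trans (norm_nonneg _) (hC 0)
  have hstrong := fun ζ => strong_of_sharp M hξ hrep hψf hzM hC h ζ
  have hterm : ∀ j, Tendsto (fun n => ‖z n (η j)‖ ^ 2 + ‖(star (z n)) (η j)‖ ^ 2) F (𝓝 0) := by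
    intro j
    obtain ⟨h1, h2⟩ := hstrong (η j)
    have e1 : Tendsto (fun n => ‖z n (η j)‖ ^ 2) F (𝓝 0) := by
      have := (h1.norm.pow 2)
      simpa using this
    have e2 : Tendsto (fun n => ‖(star (z n)) (η j)‖ ^ 2) F (𝓝 0) := by
      have := (h2.norm.pow 2)
      simpa using this
    simpa using e1.add e2
  have hvSq : Tendsto (fun n => vSq η (z n)) F (𝓝 0) := by
    refine tendsto_tsum_of_dominated _ (fun j => 2 * C ^ 2 * ‖η j‖ ^ 2)
      (hη.mul_left _) (fun j n => by positivity) (fun j n => ?_) hterm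
    have h1 : ‖z n (η j)‖ ≤ C * ‖η j‖ :=
      le_trans ((z n).le_opNorm _) (mul_le_mul_of_nonneg_right (hC n) (norm_nonneg _))
    have h2 : ‖(star (z n)) (η j)‖ ≤ C * ‖η j‖ := by
      refine le_trans ((star (z n)).le_opNorm _) ?_
      rw [norm_star]
      exact mul_le_mul_of_nonneg_right (hC n) (norm_nonneg _)
    have h6 : ‖z n (η j)‖ ^ 2 ≤ (C * ‖η j‖) ^ 2 := by
      exact pow_le_pow_left₀ (norm_nonneg _) h1 2
    have h7 : ‖(star (z n)) (η j)‖ ^ 2 ≤ (C * ‖η j‖) ^ 2 := by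
      exact pow_le_pow_left₀ (norm_nonneg _) h2 2
    calc ‖z n (η j)‖ ^ 2 + ‖(star (z n)) (η j)‖ ^ 2 ≤ (C * ‖η j‖) ^ 2 + (C * ‖η j‖) ^ 2 :=
          add_le_add h6 h7
      _ = 2 * C ^ 2 * ‖η j‖ ^ 2 := by ring
  exact tendsto_sharp_of_vSq hη hrep' hvSq

lemma uniform_switch (M : VonNeumannAlgebra H)
    {ψ : (H →L[ℂ] H) → ℂ} (hψ : IsNormalState M ψ) (hψf : FaithfulOn M ψ)
    {φ' : (H →L[ℂ] H) → ℂ} (hφ' : IsPositiveNormalFunctional φ')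
    (C : ℝ) {ε : ℝ} (hε : 0 < ε) :
    ∃ δ > 0, ∀ z : H →L[ℂ] H, z ∈ M → ‖z‖ ≤ C → sharpNorm ψ z < δ → sharpNorm φ' z < ε := by
  by_contra hcon
  push_neg at hcon
  choose zf hmem hbd hsmall hbig using fun k : ℕ =>
    hcon (1 / (k + 1)) (by positivity)
  have h1 : Tendsto (fun k => sharpNorm ψ (zf k)) atTop (𝓝 0) := by
    refine squeeze_zero (fun k => sharpNorm_nonneg _ _) (fun k => (hsmall k).le) ?_
    exact tendsto_one_div_add_atTop_nhds_zero_nat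
  have h2 := tendsto_sharp_switch M hψ hψf hφ' hmem hbd h1
  obtain ⟨k, hk⟩ := ((Metric.tendsto_nhds.mp h2) ε hε).exists
  rw [dist_zero_right, Real.norm_eq_abs, abs_of_nonneg (sharpNorm_nonneg _ _)] at hk
  exact absurd hk (not_lt.mpr (hbig k))

end Part2


section Part3

lemma vn_inv_mem (M : VonNeumannAlgebra H) {z : H →L[ℂ] H} (hz : z ∈ M)
    (u : (H →L[ℂ] H)ˣ) (hu : (u : H →L[ℂ] H) = z) : (↑u⁻¹ : H →L[ℂ] H) ∈ M := by
  have h2 : (↑u⁻¹ : H →L[ℂ] H) ∈ (M : Set (H →L[ℂ] H)) := by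
    rw [← M.centralizer_centralizer]
    intro a ha
    have h3 : (↑u : H →L[ℂ] H) * a = a * ↑u := by rw [hu]; exact ha z hz
    have h4 := congrArg (fun t => (↑u⁻¹ : H →L[ℂ] H) * t * ↑u⁻¹) h3
    simpa [mul_assoc, Units.inv_mul_cancel_left, Units.mul_inv_cancel_left,
      Units.mul_inv_cancel_right, Units.inv_mul_cancel_right] using h4
  exact h2

lemma alpha_norm_le {G : Type} [Group G] [TopologicalSpace G]
    {M : VonNeumannAlgebra H} (α : VNAction G M) (g : G)
    {z : H →L[ℂ] H} (hz : z ∈ M) : ‖α.toFun g z‖ ≤ ‖z‖ := by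
  have hspec : ∀ b, b ∈ M → spectrum ℂ (α.toFun g b) ⊆ spectrum ℂ b := by
    intro b hb μ hμ
    by_contra hns
    rw [spectrum.notMem_iff] at hns
    obtain ⟨u, hu⟩ := hns
    set zb := algebraMap ℂ (H →L[ℂ] H) μ - b with hzb
    have hzbM : zb ∈ M := by
      rw [hzb, Algebra.algebraMap_eq_smul_one]
      exact sub_mem (M.smul_mem (one_mem M) μ) hb
    have hvM : (↑u⁻¹ : H →L[ℂ] H) ∈ M := vn_inv_mem M hzbM u hu
    have e1 : α.toFun g zb = algebraMap ℂ (H →L[ℂ] H) μ - α.toFun g b := by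
      have e0 : zb = μ • (1 : H →L[ℂ] H) + (-1 : ℂ) • b := by
        rw [hzb, Algebra.algebraMap_eq_smul_one]
        simp [sub_eq_add_neg]
      rw [e0, α.map_add' g _ (M.smul_mem (one_mem M) μ) _ (M.smul_mem hb (-1)),
        α.map_smul' g μ _ (one_mem M), α.map_smul' g (-1) _ hb, α.map_one' g,
        Algebra.algebraMap_eq_smul_one]
      simp [sub_eq_add_neg]
    have m1 : α.toFun g zb * α.toFun g (↑u⁻¹) = 1 := by
      rw [← α.map_mul' g _ hzbM _ hvM,
        show zb * (↑u⁻¹ : H →L[ℂ] H) = 1 by rw [← hu]; exact u.mul_inv]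
      exact α.map_one' g
    have m2 : α.toFun g (↑u⁻¹) * α.toFun g zb = 1 := by
      rw [← α.map_mul' g _ hvM _ hzbM,
        show (↑u⁻¹ : H →L[ℂ] H) * zb = 1 by rw [← hu]; exact u.inv_mul]
      exact α.map_one' g
    have : IsUnit (algebraMap ℂ (H →L[ℂ] H) μ - α.toFun g b) := by
      rw [← e1]; exact ⟨⟨_, _, m1, m2⟩, rfl⟩
    exact (spectrum.notMem_iff.mpr this) hμ
  have hsa : ∀ b, b ∈ M → IsSelfAdjoint b → ‖α.toFun g b‖ ≤ ‖b‖ := by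
    intro b hb hsb
    have h1 : IsSelfAdjoint (α.toFun g b) := by
      show star _ = _
      rw [← α.map_star' g b hb, hsb.star_eq]
    have e1 := h1.spectralRadius_eq_nnnorm
    have e2 := hsb.spectralRadius_eq_nnnorm
    have hmono : spectralRadius ℂ (α.toFun g b) ≤ spectralRadius ℂ b := by
      refine iSup₂_le fun k hk => ?_
      exact le_iSup₂ (f := fun k (_ : k ∈ spectrum ℂ b) => (‖k‖₊ : ℝ≥0∞)) k (hspec b hb hk)
    rw [e1, e2] at hmono
    have := ENNReal.coe_le_coe.mp hmono
    exact_mod_cast this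
  have hb1 : star z * z ∈ M := mul_mem (star_mem hz) hz
  have hb2 : IsSelfAdjoint (star z * z) := by
    show star _ = _
    rw [star_mul, star_star]
  have key := hsa _ hb1 hb2
  have c1 : ‖α.toFun g z‖ * ‖α.toFun g z‖ = ‖α.toFun g (star z * z)‖ := by
    rw [α.map_mul' g _ (star_mem hz) _ hz, α.map_star' g z hz]
    exact (CStarRing.norm_star_mul_self).symm
  have c2 : ‖star z * z‖ = ‖z‖ * ‖z‖ := CStarRing.norm_star_mul_self
  nlinarith [norm_nonneg (α.toFun g z), norm_nonneg z]

lemma vSq_mul_le {ξ : ℕ → H} (hξ : Summable fun i => ‖ξ i‖ ^ 2) (u w : H →L[ℂ] H) :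
    vSq ξ (u * w) ≤ ‖u‖ ^ 2 * vSq ξ w + ‖w‖ ^ 2 * vSq ξ u := by
  have hterm : ∀ i, ‖(u * w) (ξ i)‖ ^ 2 + ‖(star (u * w)) (ξ i)‖ ^ 2
      ≤ ‖u‖ ^ 2 * (‖w (ξ i)‖ ^ 2 + ‖(star w) (ξ i)‖ ^ 2)
        + ‖w‖ ^ 2 * (‖u (ξ i)‖ ^ 2 + ‖(star u) (ξ i)‖ ^ 2) := by
    intro i
    have a1 : ‖(u * w) (ξ i)‖ ≤ ‖u‖ * ‖w (ξ i)‖ := u.le_opNorm _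
    have a2 : ‖(star (u * w)) (ξ i)‖ ≤ ‖w‖ * ‖(star u) (ξ i)‖ := by
      rw [star_mul]
      have := (star w).le_opNorm ((star u) (ξ i))
      simpa [norm_star] using this
    have b1 : ‖(u * w) (ξ i)‖ ^ 2 ≤ ‖u‖ ^ 2 * ‖w (ξ i)‖ ^ 2 := by
      have := pow_le_pow_left₀ (norm_nonneg _) a1 2
      rwa [mul_pow] at this
    have b2 : ‖(star (u * w)) (ξ i)‖ ^ 2 ≤ ‖w‖ ^ 2 * ‖(star u) (ξ i)‖ ^ 2 := by
      have := pow_le_pow_left₀ (norm_nonneg _) a2 2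
      rwa [mul_pow] at this
    have c1 : (0:ℝ) ≤ ‖u‖ ^ 2 * ‖(star w) (ξ i)‖ ^ 2 := by positivity
    have c2 : (0:ℝ) ≤ ‖w‖ ^ 2 * ‖u (ξ i)‖ ^ 2 := by positivity
    nlinarith
  calc vSq ξ (u * w)
      ≤ ∑' i, (‖u‖ ^ 2 * (‖w (ξ i)‖ ^ 2 + ‖(star w) (ξ i)‖ ^ 2)
        + ‖w‖ ^ 2 * (‖u (ξ i)‖ ^ 2 + ‖(star u) (ξ i)‖ ^ 2)) :=
        Summable.tsum_le_tsum hterm (summable_vSq hξ _)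
          (((summable_vSq hξ w).mul_left _).add ((summable_vSq hξ u).mul_left _))
    _ = ‖u‖ ^ 2 * vSq ξ w + ‖w‖ ^ 2 * vSq ξ u := by
        rw [Summable.tsum_add ((summable_vSq hξ w).mul_left _) ((summable_vSq hξ u).mul_left _),
          tsum_mul_left, tsum_mul_left]
        rfl

lemma vSq_add3_le {ξ : ℕ → H} (hξ : Summable fun i => ‖ξ i‖ ^ 2) (a b c : H →L[ℂ] H) :
    vSq ξ (a + b + c) ≤ 3 * (vSq ξ a + vSq ξ b + vSq ξ c) := by
  have hterm : ∀ i, ‖(a + b + c) (ξ i)‖ ^ 2 + ‖(star (a + b + c)) (ξ i)‖ ^ 2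
      ≤ 3 * ((‖a (ξ i)‖ ^ 2 + ‖(star a) (ξ i)‖ ^ 2) + (‖b (ξ i)‖ ^ 2 + ‖(star b) (ξ i)‖ ^ 2)
        + (‖c (ξ i)‖ ^ 2 + ‖(star c) (ξ i)‖ ^ 2)) := by
    intro i
    have a1 : ‖(a + b + c) (ξ i)‖ ≤ ‖a (ξ i)‖ + ‖b (ξ i)‖ + ‖c (ξ i)‖ := by
      have : (a + b + c) (ξ i) = a (ξ i) + b (ξ i) + c (ξ i) := rfl
      rw [this]; exact norm_add₃_le
    have a2 : ‖(star (a + b + c)) (ξ i)‖ ≤ ‖(star a) (ξ i)‖ + ‖(star b) (ξ i)‖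
        + ‖(star c) (ξ i)‖ := by
      have : (star (a + b + c)) (ξ i) = (star a) (ξ i) + (star b) (ξ i) + (star c) (ξ i) := by
        rw [star_add, star_add]; rfl
      rw [this]; exact norm_add₃_le
    have s1 : ‖(a + b + c) (ξ i)‖ ^ 2 ≤ (‖a (ξ i)‖ + ‖b (ξ i)‖ + ‖c (ξ i)‖) ^ 2 :=
      pow_le_pow_left₀ (norm_nonneg _) a1 2
    have s2 : ‖(star (a + b + c)) (ξ i)‖ ^ 2
        ≤ (‖(star a) (ξ i)‖ + ‖(star b) (ξ i)‖ + ‖(star c) (ξ i)‖) ^ 2 :=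
      pow_le_pow_left₀ (norm_nonneg _) a2 2
    have t1 : (‖a (ξ i)‖ + ‖b (ξ i)‖ + ‖c (ξ i)‖) ^ 2
        ≤ 3 * (‖a (ξ i)‖ ^ 2 + ‖b (ξ i)‖ ^ 2 + ‖c (ξ i)‖ ^ 2) := by
      nlinarith [sq_nonneg (‖a (ξ i)‖ - ‖b (ξ i)‖), sq_nonneg (‖a (ξ i)‖ - ‖c (ξ i)‖),
        sq_nonneg (‖b (ξ i)‖ - ‖c (ξ i)‖)]
    have t2 : (‖(star a) (ξ i)‖ + ‖(star b) (ξ i)‖ + ‖(star c) (ξ i)‖) ^ 2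
        ≤ 3 * (‖(star a) (ξ i)‖ ^ 2 + ‖(star b) (ξ i)‖ ^ 2 + ‖(star c) (ξ i)‖ ^ 2) := by
      nlinarith [sq_nonneg (‖(star a) (ξ i)‖ - ‖(star b) (ξ i)‖),
        sq_nonneg (‖(star a) (ξ i)‖ - ‖(star c) (ξ i)‖),
        sq_nonneg (‖(star b) (ξ i)‖ - ‖(star c) (ξ i)‖)]
    linarith
  calc vSq ξ (a + b + c)
      ≤ ∑' i, (3 * ((‖a (ξ i)‖ ^ 2 + ‖(star a) (ξ i)‖ ^ 2)
          + (‖b (ξ i)‖ ^ 2 + ‖(star b) (ξ i)‖ ^ 2)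
          + (‖c (ξ i)‖ ^ 2 + ‖(star c) (ξ i)‖ ^ 2))) :=
        Summable.tsum_le_tsum hterm (summable_vSq hξ _)
          ((((summable_vSq hξ a).add (summable_vSq hξ b)).add (summable_vSq hξ c)).mul_left 3)
    _ = 3 * (vSq ξ a + vSq ξ b + vSq ξ c) := by
        rw [tsum_mul_left,
          Summable.tsum_add ((summable_vSq hξ a).add (summable_vSq hξ b)) (summable_vSq hξ c),
          Summable.tsum_add (summable_vSq hξ a) (summable_vSq hξ b)]
        rfl

end Part3


section Part4

lemma uniform_multiplier (ω : Ultrafilter ℕ) (hω : (ω : Filter ℕ) ≤ Filter.cofinite)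
    (M : VonNeumannAlgebra H) {φ : (H →L[ℂ] H) → ℂ} (hφ : IsNormalState M φ)
    (hφf : FaithfulOn M φ) {x : ℕ → H →L[ℂ] H} (hxN : NomegaSeq ω M x)
    {C₀ : ℝ} (hC₀ : 0 ≤ C₀) {ε : ℝ} (hε : 0 < ε) :
    ∃ δ > 0, ∃ W ∈ ω, ∀ n ∈ W, ∀ z : H →L[ℂ] H, z ∈ M → ‖z‖ ≤ C₀ →
      sharpNorm φ z < δ → sharpNorm φ (x n * z) < ε ∧ sharpNorm φ (z * x n) < ε := by
  classical
  by_contra hcon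
  set A : ℕ → Set ℕ := fun k => {n | ∃ z : H →L[ℂ] H, z ∈ M ∧ ‖z‖ ≤ C₀ ∧
    sharpNorm φ z < 1 / (k + 1) ∧
    ¬(sharpNorm φ (x n * z) < ε ∧ sharpNorm φ (z * x n) < ε)} with hAdef
  have hA : ∀ k : ℕ, A k ∈ ω := by
    intro k
    by_contra hk
    rw [← Ultrafilter.compl_mem_iff_notMem] at hk
    refine hcon ⟨1 / (k + 1), by positivity, (A k)ᶜ, hk, ?_⟩
    intro n hn z hzM hzb hzs
    by_contra hq
    exact hn ⟨z, hzM, hzb, hzs, hq⟩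
  set W : ℕ → Set ℕ := fun k => {n | k ≤ n} ∩ ⋂ j ∈ Set.Iic k, A j with hWdef
  have hWmem : ∀ k, W k ∈ ω := by
    intro k
    refine Filter.inter_mem ?_ ((Filter.biInter_mem (Set.finite_Iic k)).mpr fun j _ => hA j)
    refine hω ?_
    rw [Filter.mem_cofinite]
    have e : {n : ℕ | k ≤ n}ᶜ = {n | n < k} := by ext n; simp [not_le]
    rw [e]
    exact Set.finite_Iio k
  have hWle : ∀ k n, n ∈ W k → k ≤ n := fun k n hn => hn.1
  have hWA : ∀ k n, n ∈ W k → ∀ j, j ≤ k → n ∈ A j := by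
    intro k n hn j hj
    have := hn.2
    rw [Set.mem_iInter₂] at this
    exact this j hj
  have hW0 : ∀ k n, n ∈ W k → n ∈ W 0 := by
    intro k n hn
    exact ⟨Nat.zero_le n, Set.mem_iInter₂.mpr fun j hj => by
      have : j = 0 := Nat.le_zero.mp hj
      subst this
      exact hWA k n hn 0 (Nat.zero_le k)⟩
  let kk : ℕ → ℕ := fun n => Nat.findGreatest (fun k => n ∈ W k) n
  have hkk_mem : ∀ n, n ∈ W 0 → n ∈ W (kk n) := fun n hn =>
    Nat.findGreatest_spec (P := fun k => n ∈ W k) (Nat.zero_le n) hn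
  have hkk_ge : ∀ n k, n ∈ W k → k ≤ kk n := fun n k hn =>
    Nat.le_findGreatest (hWle k n hn) hn
  have hchoice : ∀ n, n ∈ W 0 → ∃ z : H →L[ℂ] H, z ∈ M ∧ ‖z‖ ≤ C₀ ∧
      sharpNorm φ z < 1 / (kk n + 1) ∧
      ¬(sharpNorm φ (x n * z) < ε ∧ sharpNorm φ (z * x n) < ε) := by
    intro n hn
    exact hWA (kk n) n (hkk_mem n hn) (kk n) le_rfl
  set y : ℕ → (H →L[ℂ] H) := fun n =>
    if h : n ∈ W 0 then (hchoice n h).choose else 0 with hydef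
  have hyspec : ∀ n (h : n ∈ W 0), y n ∈ M ∧ ‖y n‖ ≤ C₀ ∧
      sharpNorm φ (y n) < 1 / (kk n + 1) ∧
      ¬(sharpNorm φ (x n * y n) < ε ∧ sharpNorm φ (y n * x n) < ε) := by
    intro n h
    have : y n = (hchoice n h).choose := by rw [hydef]; exact dif_pos h
    rw [this]
    exact (hchoice n h).choose_spec
  have hyI : IomegaSeq ω M y := by
    refine ⟨⟨fun n => ?_, C₀, fun n => ?_⟩, φ, hφ, hφf, ?_⟩
    · by_cases h : n ∈ W 0
      · exact (hyspec n h).1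
      · have : y n = 0 := by rw [hydef]; exact dif_neg h
        rw [this]; exact zero_mem M
    · by_cases h : n ∈ W 0
      · exact (hyspec n h).2.1
      · have : y n = 0 := by rw [hydef]; exact dif_neg h
        rw [this]; simpa using hC₀
    · rw [Metric.tendsto_nhds]
      intro ε' hε'
      obtain ⟨k, hk⟩ := exists_nat_one_div_lt hε'
      have hsub : ∀ n ∈ W k, dist (sharpNorm φ (y n)) 0 < ε' := by
        intro n hn
        have hn0 : n ∈ W 0 := hW0 k n hn
        have h1 : sharpNorm φ (y n) < 1 / (kk n + 1) := (hyspec n hn0).2.2.1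
        have h2 : (1:ℝ) / (kk n + 1) ≤ 1 / (k + 1) := by
          apply one_div_le_one_div_of_le (by positivity)
          have := hkk_ge n k hn
          exact_mod_cast add_le_add_left (Nat.cast_le.mpr this) 1
        rw [Real.dist_eq, sub_zero, abs_of_nonneg (sharpNorm_nonneg _ _)]
        exact lt_of_lt_of_le h1 (le_trans h2 hk.le)
      exact Filter.mem_of_superset (hWmem k) hsub
  obtain ⟨hxy, hyx⟩ := hxN.2 y hyI
  obtain ⟨⟨hxym, Cxy, hCxy⟩, ψ₁, hψ₁, hψ₁f, hxyt⟩ := hxy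
  obtain ⟨⟨hyxm, Cyx, hCyx⟩, ψ₂, hψ₂, hψ₂f, hyxt⟩ := hyx
  have hxyφ : Tendsto (fun n => sharpNorm φ (x n * y n)) (ω : Filter ℕ) (𝓝 0) :=
    tendsto_sharp_switch M hψ₁ hψ₁f hφ.1 hxym hCxy hxyt
  have hyxφ : Tendsto (fun n => sharpNorm φ (y n * x n)) (ω : Filter ℕ) (𝓝 0) :=
    tendsto_sharp_switch M hψ₂ hψ₂f hφ.1 hyxm hCyx hyxt
  set B₁ : Set ℕ := {n | ε ≤ sharpNorm φ (x n * y n)} with hB₁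
  set B₂ : Set ℕ := {n | ε ≤ sharpNorm φ (y n * x n)} with hB₂
  have hsub : W 0 ⊆ B₁ ∪ B₂ := by
    intro n hn
    have hbad := (hyspec n hn).2.2.2
    by_cases h : sharpNorm φ (x n * y n) < ε
    · right
      by_contra h2
      exact hbad ⟨h, not_le.mp h2⟩
    · left; exact not_lt.mp h
  have hBor : B₁ ∈ ω ∨ B₂ ∈ ω :=
    Ultrafilter.union_mem_iff.mp (Filter.mem_of_superset (hWmem 0) hsub)
  cases hBor with
  | inl h1 =>
    have hev : {n | sharpNorm φ (x n * y n) < ε} ∈ (ω : Filter ℕ) := by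
      have h := (Metric.tendsto_nhds.mp hxyφ) ε hε
      refine Filter.mem_of_superset h ?_
      intro n hn
      simp only [Set.mem_setOf_eq] at hn ⊢
      rwa [Real.dist_eq, sub_zero, abs_of_nonneg (sharpNorm_nonneg _ _)] at hn
    obtain ⟨n, hn1, hn2⟩ := Filter.nonempty_of_mem (Filter.inter_mem hev h1)
    have e1 : sharpNorm φ (x n * y n) < ε := hn1
    have e2 : ε ≤ sharpNorm φ (x n * y n) := hn2
    linarith
  | inr h2 =>
    have hev : {n | sharpNorm φ (y n * x n) < ε} ∈ (ω : Filter ℕ) := by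
      have h := (Metric.tendsto_nhds.mp hyxφ) ε hε
      refine Filter.mem_of_superset h ?_
      intro n hn
      simp only [Set.mem_setOf_eq] at hn ⊢
      rwa [Real.dist_eq, sub_zero, abs_of_nonneg (sharpNorm_nonneg _ _)] at hn
    obtain ⟨n, hn1, hn2⟩ := Filter.nonempty_of_mem (Filter.inter_mem hev h2)
    have e1 : sharpNorm φ (y n * x n) < ε := hn1
    have e2 : ε ≤ sharpNorm φ (y n * x n) := hn2
    linarith

end Part4


/-- Let `M` be a σ-finite von Neumann algebra with an action
`α : G ↷ M` of a second-countable locally compact group. For any two sequences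
`(x_n), (y_n) ∈ E_α^ω ∩ N_ω(M)`, the product sequence `(x_n y_n)` belongs to
`E_α^ω`. -/
theorem stmt_8
    (ω : Ultrafilter ℕ) (hω : (ω : Filter ℕ) ≤ Filter.cofinite)
    (G : Type) [Group G] [TopologicalSpace G] [IsTopologicalGroup G]
    [LocallyCompactSpace G] [SecondCountableTopology G]
    {H : Type} [NormedAddCommGroup H] [InnerProductSpace ℂ H] [CompleteSpace H]
    (M : VonNeumannAlgebra H) (hσ : SigmaFinite M) (α : VNAction G M)
    (x y : ℕ → (H →L[ℂ] H))
    (hxE : EquicontSeq ω α x) (hxN : NomegaSeq ω M x)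
    (hyE : EquicontSeq ω α y) (hyN : NomegaSeq ω M y) :
    EquicontSeq ω α (fun n => x n * y n) := by
  classical
  obtain ⟨hxIn, φ₁, hφ₁, hφ₁f, hx⟩ := hxE
  obtain ⟨hyIn, φ₂, hφ₂, hφ₂f, hy⟩ := hyE
  obtain ⟨φ, hφ, hφf⟩ := hσ
  obtain ⟨ξ, hξ, hrep⟩ := hφ.1
  obtain ⟨hxM, Cx, hCx⟩ := hxIn
  obtain ⟨hyM, Cy, hCy⟩ := hyIn
  have hCx0 : 0 ≤ Cx := le_trans (norm_nonneg _) (hCx 0)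
  have hCy0 : 0 ≤ Cy := le_trans (norm_nonneg _) (hCy 0)
  set C₀ : ℝ := 2 * Cx + 2 * Cy + 1 with hC₀def
  have hC₀pos : 0 < C₀ := by rw [hC₀def]; linarith
  refine ⟨⟨fun n => mul_mem (hxM n) (hyM n), Cx * Cy, fun n => ?_⟩, φ, hφ, hφf, ?_⟩
  · calc ‖x n * y n‖ ≤ ‖x n‖ * ‖y n‖ := norm_mul_le _ _
      _ ≤ Cx * Cy := mul_le_mul (hCx n) (hCy n) (norm_nonneg _) hCx0
  intro ε hε
  set εq : ℝ := ε / 4 with hεqdef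
  have hεq0 : 0 < εq := by rw [hεqdef]; positivity
  obtain ⟨δx, hδx0, Wx, hWxω, hWxP⟩ :=
    uniform_multiplier ω hω M hφ hφf hxN hC₀pos.le hεq0
  obtain ⟨δy, hδy0, Wy, hWyω, hWyP⟩ :=
    uniform_multiplier ω hω M hφ hφf hyN hC₀pos.le hεq0
  set η : ℝ := min δx (min δy (εq / (2 * C₀))) with hηdef
  have hη0 : 0 < η := lt_min hδx0 (lt_min hδy0 (by positivity))
  obtain ⟨δ₁, hδ₁0, hswitch₁⟩ := uniform_switch M hφ₁ hφ₁f hφ.1 C₀ hη0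
  obtain ⟨δ₂, hδ₂0, hswitch₂⟩ := uniform_switch M hφ₂ hφ₂f hφ.1 C₀ hη0
  obtain ⟨Wx', hWx'ω, Ux, hUx, hxP⟩ := hx δ₁ hδ₁0
  obtain ⟨Wy', hWy'ω, Uy, hUy, hyP⟩ := hy δ₂ hδ₂0
  refine ⟨Wx ∩ Wy ∩ Wx' ∩ Wy',
    Filter.inter_mem (Filter.inter_mem (Filter.inter_mem hWxω hWyω) hWx'ω) hWy'ω,
    Ux ∩ Uy, Filter.inter_mem hUx hUy, ?_⟩
  intro n hn g hg
  obtain ⟨⟨⟨hnWx, hnWy⟩, hnWx'⟩, hnWy'⟩ := hn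
  obtain ⟨hgx, hgy⟩ := hg
  set u : H →L[ℂ] H := α.toFun g (x n) - x n with hu
  set w : H →L[ℂ] H := α.toFun g (y n) - y n with hw
  have huM : u ∈ M := sub_mem (α.mem' g _ (hxM n)) (hxM n)
  have hwM : w ∈ M := sub_mem (α.mem' g _ (hyM n)) (hyM n)
  have hu_bd : ‖u‖ ≤ C₀ := by
    have h1 := alpha_norm_le α g (hxM n)
    calc ‖u‖ ≤ ‖α.toFun g (x n)‖ + ‖x n‖ := norm_sub_le _ _
      _ ≤ C₀ := by rw [hC₀def]; linarith [hCx n]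
  have hw_bd : ‖w‖ ≤ C₀ := by
    have h1 := alpha_norm_le α g (hyM n)
    calc ‖w‖ ≤ ‖α.toFun g (y n)‖ + ‖y n‖ := norm_sub_le _ _
      _ ≤ C₀ := by rw [hC₀def]; linarith [hCy n]
  have huφ : sharpNorm φ u < η := hswitch₁ u huM hu_bd (hxP n hnWx' g hgx)
  have hwφ : sharpNorm φ w < η := hswitch₂ w hwM hw_bd (hyP n hnWy' g hgy)
  have t2 : sharpNorm φ (x n * w) < εq :=
    (hWxP n hnWx w hwM hw_bd (lt_of_lt_of_le hwφ (min_le_left _ _))).1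
  have t3 : sharpNorm φ (u * y n) < εq :=
    (hWyP n hnWy u huM hu_bd
      (lt_of_lt_of_le huφ (le_trans (min_le_right _ _) (min_le_left _ _)))).2
  have t1 : sharpNorm φ (u * w) < εq := by
    rw [sharpNorm_lt_iff hξ hrep _ hεq0]
    have hvu : vSq ξ u < η ^ 2 := (sharpNorm_lt_iff hξ hrep u hη0).mp huφ
    have hvw : vSq ξ w < η ^ 2 := (sharpNorm_lt_iff hξ hrep w hη0).mp hwφ
    have hb := vSq_mul_le hξ u w
    have hηle : η ≤ εq / (2 * C₀) := le_trans (min_le_right _ _) (min_le_right _ _)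
    have h1 : ‖u‖ ^ 2 * vSq ξ w ≤ C₀ ^ 2 * vSq ξ w :=
      mul_le_mul_of_nonneg_right (pow_le_pow_left₀ (norm_nonneg _) hu_bd 2) (vSq_nonneg _ _)
    have h2 : ‖w‖ ^ 2 * vSq ξ u ≤ C₀ ^ 2 * vSq ξ u :=
      mul_le_mul_of_nonneg_right (pow_le_pow_left₀ (norm_nonneg _) hw_bd 2) (vSq_nonneg _ _)
    have h3 : C₀ ^ 2 * vSq ξ w < C₀ ^ 2 * η ^ 2 :=
      mul_lt_mul_of_pos_left hvw (by positivity)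
    have h4 : C₀ ^ 2 * vSq ξ u < C₀ ^ 2 * η ^ 2 :=
      mul_lt_mul_of_pos_left hvu (by positivity)
    have h5 : C₀ ^ 2 * η ^ 2 ≤ C₀ ^ 2 * (εq / (2 * C₀)) ^ 2 :=
      mul_le_mul_of_nonneg_left (pow_le_pow_left₀ hη0.le hηle 2) (by positivity)
    have h6 : C₀ ^ 2 * (εq / (2 * C₀)) ^ 2 = εq ^ 2 / 4 := by
      field_simp
      ring
    have hεq2 : 0 < εq ^ 2 := by positivity
    calc vSq ξ (u * w) ≤ ‖u‖ ^ 2 * vSq ξ w + ‖w‖ ^ 2 * vSq ξ u := hb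
      _ ≤ C₀ ^ 2 * vSq ξ w + C₀ ^ 2 * vSq ξ u := add_le_add h1 h2
      _ < C₀ ^ 2 * η ^ 2 + C₀ ^ 2 * η ^ 2 := add_lt_add h3 h4
      _ ≤ C₀ ^ 2 * (εq / (2 * C₀)) ^ 2 + C₀ ^ 2 * (εq / (2 * C₀)) ^ 2 := add_le_add h5 h5
      _ = εq ^ 2 / 2 := by rw [h6]; ring
      _ < εq ^ 2 := by linarith
  have hdecomp : α.toFun g (x n * y n) - x n * y n = u * w + x n * w + u * y n := by
    rw [α.map_mul' g _ (hxM n) _ (hyM n), hu, hw]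
    noncomm_ring
  have hfin : sharpNorm φ (u * w + x n * w + u * y n) < ε := by
    rw [sharpNorm_lt_iff hξ hrep _ hε]
    have hv1 : vSq ξ (u * w) < εq ^ 2 := (sharpNorm_lt_iff hξ hrep _ hεq0).mp t1
    have hv2 : vSq ξ (x n * w) < εq ^ 2 := (sharpNorm_lt_iff hξ hrep _ hεq0).mp t2
    have hv3 : vSq ξ (u * y n) < εq ^ 2 := (sharpNorm_lt_iff hξ hrep _ hεq0).mp t3
    have hadd := vSq_add3_le hξ (u * w) (x n * w) (u * y n)
    have hεeq : ε ^ 2 = 16 * εq ^ 2 := by rw [hεqdef]; ring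
    have hεq2 : 0 < εq ^ 2 := by positivity
    linarith
  show sharpNorm φ (α.toFun g (x n * y n) - x n * y n) < ε
  rw [hdecomp]
  exact hfin


end SSAW
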